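/- Each of the matrices g₁, g₂, g₃ has determinant 1 (so lies in SL(4,ℂ)), maps the lattice Λ = (ℤ[i])⁴ bijectively onto itself, and the subgroup G = ⟨g₁, g₂, g₃⟩ of GL(4,ℂ) is finite of order 24 and is isomorphic to S₃ × ℤ/2 × ℤ/2. -/
import Mathlib

open Matrix

/-- `g₁ = blockdiag([[0,1],[1,0]], diag(−1,1))`. -/
def g1 : Matrix (Fin 4) (Fin 4) ℂ :=
  !![0, 1, 0, 0;
     1, 0, 0, 0;
     0, 0, -1, 0;
     0, 0, 0, 1]

/-- `g₂ = blockdiag([[1,−1],[1,0]], I₂)`. -/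
def g2 : Matrix (Fin 4) (Fin 4) ℂ :=
  !![1, -1, 0, 0;
     1, 0, 0, 0;
     0, 0, 1, 0;
     0, 0, 0, 1]

/-- `g₃ = diag(1,1,−1,−1)`. -/
def g3 : Matrix (Fin 4) (Fin 4) ℂ :=
  !![1, 0, 0, 0;
     0, 1, 0, 0;
     0, 0, -1, 0;
     0, 0, 0, -1]

/-- The lattice `Λ = (ℤ[i])⁴ ⊂ ℂ⁴` of vectors all of whose coordinates are
Gaussian integers. -/
def GaussLattice : Set (Fin 4 → ℂ) :=
  {v | ∀ i, ∃ a b : ℤ, v i = (a : ℂ) + (b : ℂ) * Complex.I}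

/-! ### Auxiliary integer matrices -/

def Wm : Matrix (Fin 4) (Fin 4) ℤ := !![0,1,0,0;1,0,0,0;0,0,-1,0;0,0,0,1]
def Rm : Matrix (Fin 4) (Fin 4) ℤ := !![1,-1,0,0;1,0,0,0;0,0,1,0;0,0,0,1]
def Dm : Matrix (Fin 4) (Fin 4) ℤ := !![1,0,0,0;0,1,0,0;0,0,-1,0;0,0,0,-1]
def Rim : Matrix (Fin 4) (Fin 4) ℤ := !![0,1,0,0;-1,1,0,0;0,0,1,0;0,0,0,1]

noncomputable abbrev cRing : ℤ →+* ℂ := Int.castRingHom ℂ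

lemma castW : Wm.map cRing = g1 := by
  ext i j; fin_cases i <;> fin_cases j <;> simp [Wm, g1, Matrix.vecHead, Matrix.vecTail]

lemma castR : Rm.map cRing = g2 := by
  ext i j; fin_cases i <;> fin_cases j <;> simp [Rm, g2, Matrix.vecHead, Matrix.vecTail]

lemma castD : Dm.map cRing = g3 := by
  ext i j; fin_cases i <;> fin_cases j <;> simp [Dm, g3, Matrix.vecHead, Matrix.vecTail]

lemma castRi : Rim.map cRing = !![0,1,0,0;-1,1,0,0;0,0,1,0;0,0,0,1] := by
  ext i j; fin_cases i <;> fin_cases j <;> simp [Rim, Matrix.vecHead, Matrix.vecTail]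

/-! ### Determinants -/

lemma det_g1 : g1.det = 1 := by
  rw [← castW, ← RingHom.mapMatrix_apply, ← RingHom.map_det,
    show Wm.det = 1 from by decide, _root_.map_one]

lemma det_g2 : g2.det = 1 := by
  rw [← castR, ← RingHom.mapMatrix_apply, ← RingHom.map_det,
    show Rm.det = 1 from by decide, _root_.map_one]

lemma det_g3 : g3.det = 1 := by
  rw [← castD, ← RingHom.mapMatrix_apply, ← RingHom.map_det,
    show Dm.det = 1 from by decide, _root_.map_one]

/-! ### The lattice is preserved -/

lemma bijOn_lattice (A B : Matrix (Fin 4) (Fin 4) ℂ) (hAB : A * B = 1) (hBA : B * A = 1)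
    (hA : Set.MapsTo A.mulVec GaussLattice GaussLattice)
    (hB : Set.MapsTo B.mulVec GaussLattice GaussLattice) :
    Set.BijOn (fun v => A.mulVec v) GaussLattice GaussLattice := by
  have inv : Set.InvOn B.mulVec A.mulVec GaussLattice GaussLattice := by
    constructor
    · intro v _; rw [Matrix.mulVec_mulVec, hBA, Matrix.one_mulVec]
    · intro v _; rw [Matrix.mulVec_mulVec, hAB, Matrix.one_mulVec]
  exact inv.bijOn hA hB

lemma mapsTo_g1 : Set.MapsTo g1.mulVec GaussLattice GaussLattice := by
  intro v hv i
  obtain ⟨a0, b0, h0⟩ := hv 0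
  obtain ⟨a1, b1, h1⟩ := hv 1
  obtain ⟨a2, b2, h2⟩ := hv 2
  obtain ⟨a3, b3, h3⟩ := hv 3
  fin_cases i
  · exact ⟨a1, b1, by simp [Matrix.mulVec, dotProduct, g1, Fin.sum_univ_four, h1]⟩
  · exact ⟨a0, b0, by simp [Matrix.mulVec, dotProduct, g1, Fin.sum_univ_four, h0]⟩
  · exact ⟨-a2, -b2, by
      simp [Matrix.mulVec, dotProduct, g1, Fin.sum_univ_four, h2]; push_cast; ring⟩
  · exact ⟨a3, b3, by simp [Matrix.mulVec, dotProduct, g1, Fin.sum_univ_four, h3]⟩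

lemma mapsTo_g2 : Set.MapsTo g2.mulVec GaussLattice GaussLattice := by
  intro v hv i
  obtain ⟨a0, b0, h0⟩ := hv 0
  obtain ⟨a1, b1, h1⟩ := hv 1
  obtain ⟨a2, b2, h2⟩ := hv 2
  obtain ⟨a3, b3, h3⟩ := hv 3
  fin_cases i
  · exact ⟨a0 - a1, b0 - b1, by
      simp [Matrix.mulVec, dotProduct, g2, Fin.sum_univ_four, h0, h1]; push_cast; ring⟩
  · exact ⟨a0, b0, by simp [Matrix.mulVec, dotProduct, g2, Fin.sum_univ_four, h0]⟩
  · exact ⟨a2, b2, by simp [Matrix.mulVec, dotProduct, g2, Fin.sum_univ_four, h2]⟩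
  · exact ⟨a3, b3, by simp [Matrix.mulVec, dotProduct, g2, Fin.sum_univ_four, h3]⟩

lemma mapsTo_g2i :
    Set.MapsTo (Matrix.mulVec (!![0,1,0,0;-1,1,0,0;0,0,1,0;0,0,0,1] : Matrix (Fin 4) (Fin 4) ℂ))
      GaussLattice GaussLattice := by
  intro v hv i
  obtain ⟨a0, b0, h0⟩ := hv 0
  obtain ⟨a1, b1, h1⟩ := hv 1
  obtain ⟨a2, b2, h2⟩ := hv 2
  obtain ⟨a3, b3, h3⟩ := hv 3
  fin_cases i
  · exact ⟨a1, b1, by simp [Matrix.mulVec, dotProduct, Fin.sum_univ_four, h1]⟩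
  · exact ⟨a1 - a0, b1 - b0, by
      simp [Matrix.mulVec, dotProduct, Fin.sum_univ_four, h0, h1]; push_cast; ring⟩
  · exact ⟨a2, b2, by simp [Matrix.mulVec, dotProduct, Fin.sum_univ_four, h2]⟩
  · exact ⟨a3, b3, by simp [Matrix.mulVec, dotProduct, Fin.sum_univ_four, h3]⟩

lemma mapsTo_g3 : Set.MapsTo g3.mulVec GaussLattice GaussLattice := by
  intro v hv i
  obtain ⟨a0, b0, h0⟩ := hv 0
  obtain ⟨a1, b1, h1⟩ := hv 1
  obtain ⟨a2, b2, h2⟩ := hv 2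
  obtain ⟨a3, b3, h3⟩ := hv 3
  fin_cases i
  · exact ⟨a0, b0, by simp [Matrix.mulVec, dotProduct, g3, Fin.sum_univ_four, h0]⟩
  · exact ⟨a1, b1, by simp [Matrix.mulVec, dotProduct, g3, Fin.sum_univ_four, h1]⟩
  · exact ⟨-a2, -b2, by
      simp [Matrix.mulVec, dotProduct, g3, Fin.sum_univ_four, h2]; push_cast; ring⟩
  · exact ⟨-a3, -b3, by
      simp [Matrix.mulVec, dotProduct, g3, Fin.sum_univ_four, h3]; push_cast; ring⟩

lemma mul_self_g1 : g1 * g1 = 1 := by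
  rw [← castW, ← Matrix.map_mul, show Wm * Wm = 1 from by decide,
    Matrix.map_one _ (_root_.map_zero _) (_root_.map_one _)]

lemma mul_g2 : g2 * (!![0,1,0,0;-1,1,0,0;0,0,1,0;0,0,0,1] : Matrix (Fin 4) (Fin 4) ℂ) = 1 := by
  rw [← castR, ← castRi, ← Matrix.map_mul, show Rm * Rim = 1 from by decide,
    Matrix.map_one _ (_root_.map_zero _) (_root_.map_one _)]

lemma mul_g2' : (!![0,1,0,0;-1,1,0,0;0,0,1,0;0,0,0,1] : Matrix (Fin 4) (Fin 4) ℂ) * g2 = 1 := by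
  rw [← castR, ← castRi, ← Matrix.map_mul, show Rim * Rm = 1 from by decide,
    Matrix.map_one _ (_root_.map_zero _) (_root_.map_one _)]

lemma mul_self_g3 : g3 * g3 = 1 := by
  rw [← castD, ← Matrix.map_mul, show Dm * Dm = 1 from by decide,
    Matrix.map_one _ (_root_.map_zero _) (_root_.map_one _)]

/-! ### The abstract group and its 4-dimensional representation -/

abbrev Gabs := Equiv.Perm (Fin 3) × Multiplicative (ZMod 2) × Multiplicative (ZMod 2)

abbrev SmallM := Matrix (Fin 2) (Fin 2) ℤ × (Fin 2 → ℤ)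

def cyc : Equiv.Perm (Fin 3) := finRotate 3

def PMb (σ : Equiv.Perm (Fin 3)) : Matrix (Fin 2) (Fin 2) ℤ :=
  if σ = 1 then 1 else if σ = cyc then !![0,-1;1,-1] else if σ = cyc * cyc then !![-1,1;-1,0]
  else if σ = Equiv.swap 0 1 then !![0,1;1,0] else if σ = Equiv.swap 0 2 then !![-1,0;-1,1]
  else !![1,-1;0,-1]

def ψM (a : Gabs) : SmallM :=
  ((if a.2.1 = 1 then PMb a.1 else -PMb a.1),
   if a.2.2 = 1 then (if a.1 = 1 ∨ a.1 = cyc ∨ a.1 = cyc * cyc then ![1,1] else ![-1,1])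
   else (if a.1 = 1 ∨ a.1 = cyc ∨ a.1 = cyc * cyc then ![-1,-1] else ![1,-1]))

theorem ψM_mul : ∀ a b : Gabs, ψM (a * b) = ψM a * ψM b := by decide

theorem ψM_inj : ∀ a b : Gabs, ψM a = ψM b → a = b := by decide

/-- Assemble a 2×2 block and two diagonal signs into a 4×4 matrix. -/
def Θfun (p : SmallM) : Matrix (Fin 4) (Fin 4) ℤ :=
  !![p.1 0 0, p.1 0 1, 0, 0;
     p.1 1 0, p.1 1 1, 0, 0;
     0, 0, p.2 0, 0;
     0, 0, 0, p.2 1]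

def Θ : SmallM →* Matrix (Fin 4) (Fin 4) ℤ where
  toFun := Θfun
  map_one' := by
    ext i j
    fin_cases i <;> fin_cases j <;>
      simp [Θfun, Matrix.one_apply, Matrix.vecHead, Matrix.vecTail]
  map_mul' p q := by
    ext i j
    fin_cases i <;> fin_cases j <;>
      simp [Θfun, Matrix.mul_apply, Fin.sum_univ_four, Fin.sum_univ_two, Matrix.vecHead, Matrix.vecTail] <;> ring

lemma Θ_inj : Function.Injective Θ := by
  intro p q h
  have e : ∀ i j, Θfun p i j = Θfun q i j := fun i j => by
    show (Θ p : Matrix (Fin 4) (Fin 4) ℤ) i j = Θ q i j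
    rw [h]
  refine Prod.ext ?_ ?_
  · ext i j
    fin_cases i <;> fin_cases j
    · simpa [Θfun] using e 0 0
    · simpa [Θfun] using e 0 1
    · simpa [Θfun] using e 1 0
    · simpa [Θfun] using e 1 1
  · ext i
    fin_cases i
    · simpa [Θfun] using e 2 2
    · simpa [Θfun] using e 3 3

def ψMhom : Gabs →* SmallM where
  toFun := ψM
  map_one' := by decide
  map_mul' := ψM_mul

def ψmat : Gabs →* Matrix (Fin 4) (Fin 4) ℤ := Θ.comp ψMhom

noncomputable def ψ : Gabs →* GL (Fin 4) ℂ :=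
  (Units.map (cRing.mapMatrix.toMonoidHom)).comp ψmat.toHomUnits

lemma ψ_val (a : Gabs) : (ψ a : Matrix (Fin 4) (Fin 4) ℂ) = (ψmat a).map cRing := rfl

lemma ψ_inj : Function.Injective ψ := by
  intro a b h
  have h1 : (ψmat a).map cRing = (ψmat b).map cRing := by
    rw [← ψ_val, ← ψ_val, h]
  have h2 : ψmat a = ψmat b := by
    ext i j
    have := congrFun (congrFun h1 i) j
    simpa [Matrix.map_apply] using this
  exact ψM_inj a b (Θ_inj h2)

def x₀ : Multiplicative (ZMod 2) := Multiplicative.ofAdd 1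

theorem calabi_yau_group_order_24
    (u1 u2 u3 : GL (Fin 4) ℂ)
    (h1 : (u1 : Matrix (Fin 4) (Fin 4) ℂ) = g1)
    (h2 : (u2 : Matrix (Fin 4) (Fin 4) ℂ) = g2)
    (h3 : (u3 : Matrix (Fin 4) (Fin 4) ℂ) = g3) :
    (∀ g ∈ ({g1, g2, g3} : Set (Matrix (Fin 4) (Fin 4) ℂ)),
      g.det = 1 ∧ Set.BijOn (fun v => g.mulVec v) GaussLattice GaussLattice) ∧
    ((Subgroup.closure {u1, u2, u3} : Subgroup (GL (Fin 4) ℂ)) :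
        Set (GL (Fin 4) ℂ)).Finite ∧
    Nat.card (Subgroup.closure ({u1, u2, u3} : Set (GL (Fin 4) ℂ))) = 24 ∧
    Nonempty ((Subgroup.closure ({u1, u2, u3} : Set (GL (Fin 4) ℂ))) ≃*
      Equiv.Perm (Fin 3) × Multiplicative (ZMod 2) × Multiplicative (ZMod 2)) := by
  -- A helper to prove equalities of units via values.
  have uext : ∀ {x y : GL (Fin 4) ℂ},
      (x : Matrix (Fin 4) (Fin 4) ℂ) = y → x = y := fun h => Units.ext h
  -- ψ at the key points
  have key : ∀ (a : Gabs) (L : Matrix (Fin 4) (Fin 4) ℤ), ψmat a = L →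
      (ψ a : Matrix (Fin 4) (Fin 4) ℂ) = L.map cRing := by
    intro a L hL; rw [ψ_val, hL]
  have e1 : ψ (Equiv.swap 0 1, 1, 1) = u1 := by
    apply uext
    rw [key _ Wm (by decide), castW, h1]
  have e2 : ψ (cyc * cyc, x₀, 1) = u2 := by
    apply uext
    rw [key _ Rm (by decide), castR, h2]
  have e3 : ψ (1, 1, x₀) = u3 := by
    apply uext
    rw [key _ Dm (by decide), castD, h3]
  have eC : ψ (1, x₀, 1) = u2 * u2 * u2 := by
    apply uext
    rw [key _ (Rm * Rm * Rm) (by decide), Matrix.map_mul, Matrix.map_mul, castR]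
    simp [Units.val_mul, h2]
  have eT : ψ (cyc, 1, 1) = u2 * u2 := by
    apply uext
    rw [key _ (Rm * Rm) (by decide), Matrix.map_mul, castR]
    simp [Units.val_mul, h2]
  have eT2 : ψ (cyc * cyc, 1, 1) = u2 * u2 * u2 * u2 := by
    apply uext
    rw [key _ (Rm * Rm * Rm * Rm) (by decide), Matrix.map_mul, Matrix.map_mul,
      Matrix.map_mul, castR]
    simp [Units.val_mul, h2]
  have eTW : ψ (Equiv.swap 0 2, 1, 1) = u2 * u2 * u1 := by
    apply uext
    rw [key _ (Rm * Rm * Wm) (by decide), Matrix.map_mul, Matrix.map_mul, castR, castW]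
    simp [Units.val_mul, h1, h2]
  have eWT : ψ (Equiv.swap 1 2, 1, 1) = u1 * (u2 * u2) := by
    apply uext
    rw [key _ (Wm * (Rm * Rm)) (by decide), Matrix.map_mul, Matrix.map_mul, castR, castW]
    simp [Units.val_mul, h1, h2]
  -- the range of ψ is the closure
  have hrange : ψ.range = Subgroup.closure ({u1, u2, u3} : Set (GL (Fin 4) ℂ)) := by
    apply le_antisymm
    · rintro g ⟨a, rfl⟩
      obtain ⟨σ, x, y⟩ := a
      have hdecomp : (σ, x, y) = ((σ, 1, 1) : Gabs) * (1, x, 1) * (1, 1, y) := by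
        simp [Prod.ext_iff]
      rw [hdecomp, _root_.map_mul, _root_.map_mul]
      have hu1 : u1 ∈ Subgroup.closure ({u1, u2, u3} : Set (GL (Fin 4) ℂ)) :=
        Subgroup.subset_closure (by simp)
      have hu2 : u2 ∈ Subgroup.closure ({u1, u2, u3} : Set (GL (Fin 4) ℂ)) :=
        Subgroup.subset_closure (by simp)
      have hu3 : u3 ∈ Subgroup.closure ({u1, u2, u3} : Set (GL (Fin 4) ℂ)) :=
        Subgroup.subset_closure (by simp)
      refine mul_mem (mul_mem ?_ ?_) ?_
      · rcases (by decide : ∀ τ : Equiv.Perm (Fin 3), τ = 1 ∨ τ = cyc ∨ τ = cyc * cyc ∨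
            τ = Equiv.swap 0 1 ∨ τ = Equiv.swap 0 2 ∨ τ = Equiv.swap 1 2) σ
            with rfl | rfl | rfl | rfl | rfl | rfl
        · rw [show ((1, 1, 1) : Gabs) = 1 from rfl, _root_.map_one]; exact one_mem _
        · rw [eT]; exact mul_mem hu2 hu2
        · rw [eT2]; exact mul_mem (mul_mem (mul_mem hu2 hu2) hu2) hu2
        · rw [e1]; exact hu1
        · rw [eTW]; exact mul_mem (mul_mem hu2 hu2) hu1
        · rw [eWT]; exact mul_mem hu1 (mul_mem hu2 hu2)
      · rcases (by decide : ∀ z : Multiplicative (ZMod 2), z = 1 ∨ z = x₀) x with rfl | rfl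
        · rw [show ((1, 1, 1) : Gabs) = 1 from rfl, _root_.map_one]; exact one_mem _
        · rw [eC]; exact mul_mem (mul_mem hu2 hu2) hu2
      · rcases (by decide : ∀ z : Multiplicative (ZMod 2), z = 1 ∨ z = x₀) y with rfl | rfl
        · rw [show ((1, 1, 1) : Gabs) = 1 from rfl, _root_.map_one]; exact one_mem _
        · rw [e3]; exact hu3
    · rw [Subgroup.closure_le]
      rintro g hg
      simp only [Set.mem_insert_iff, Set.mem_singleton_iff] at hg
      rcases hg with rfl | rfl | rfl
      · exact ⟨(Equiv.swap 0 1, 1, 1), e1⟩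
      · exact ⟨(cyc * cyc, x₀, 1), e2⟩
      · exact ⟨(1, 1, x₀), e3⟩
  have hcard : Nat.card Gabs = 24 := by
    simp [Nat.card_eq_fintype_card, Fintype.card_perm]
    norm_num [Nat.factorial]
  refine ⟨?_, ?_, ?_, ?_⟩
  · intro g hg
    simp only [Set.mem_insert_iff, Set.mem_singleton_iff] at hg
    rcases hg with rfl | rfl | rfl
    · exact ⟨det_g1, bijOn_lattice g1 g1 mul_self_g1 mul_self_g1 mapsTo_g1 mapsTo_g1⟩
    · exact ⟨det_g2, bijOn_lattice g2 _ mul_g2 mul_g2' mapsTo_g2 mapsTo_g2i⟩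
    · exact ⟨det_g3, bijOn_lattice g3 g3 mul_self_g3 mul_self_g3 mapsTo_g3 mapsTo_g3⟩
  · rw [← hrange]
    have : (ψ.range : Set (GL (Fin 4) ℂ)) = Set.range ψ := rfl
    rw [this]
    exact Set.finite_range _
  · rw [← hrange]
    have := Nat.card_congr (MonoidHom.ofInjective ψ_inj).toEquiv
    rw [← this, hcard]
  · exact ⟨(MulEquiv.subgroupCongr hrange.symm).trans (MonoidHom.ofInjective ψ_inj).symm⟩
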